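/- arXiv:2411.17159 — 9 statements merged into one kernel-verified Lean document; each statement's English description precedes it below -/
import Mathlib

section
/- Let z = x + iy be a point of the hyperbola H. Then the following are equivalent: (i) z ∈ R; (ii) (x − (α+α')/2)² − 𝒜²/4 ≤ 0; (iii) x ∈ [min(α,α'), max(α,α')] or y ∈ [min(β,β'), max(β,β')]. -/
lemma icc_iff_sq (p q a : ℝ) :
    a ∈ Set.Icc (min p q) (max p q) ↔ (a - (p + q) / 2) ^ 2 - (q - p) ^ 2 / 4 ≤ 0 := by
  rcases le_total p q with h | h <;>
    simp only [Set.mem_Icc, min_eq_left h, max_eq_right h, min_eq_right h, max_eq_left h] <;>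
    constructor <;> intro hh <;>
    [skip; constructor; skip; constructor] <;> nlinarith [hh, sq_nonneg (a - (p + q) / 2)]

/-- For `z = x + iy ∈ H`, the conditions (i) `z ∈ R`,
(ii) `(x − (α+α')/2)² − 𝒜²/4 ≤ 0`, and
(iii) `x ∈ [min(α,α'), max(α,α')]` or `y ∈ [min(β,β'), max(β,β')]` are equivalent. -/
theorem stmt_2 (α α' β β' : ℝ) (hα : α ≠ α') (hβ : β ≠ β')
    (H R : Set ℂ)
    (hH : H = {w : ℂ | (w.re - (α + α') / 2) ^ 2 - (w.im - (β + β') / 2) ^ 2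
        = ((α' - α) ^ 2 - (β' - β) ^ 2) / 4})
    (hR : R = {w : ℂ | w.re ∈ Set.Icc (min α α') (max α α')
        ∧ w.im ∈ Set.Icc (min β β') (max β β')})
    (z : ℂ) (hz : z ∈ H) :
    (z ∈ R ↔ (z.re - (α + α') / 2) ^ 2 - (α' - α) ^ 2 / 4 ≤ 0) ∧
    (z ∈ R ↔ (z.re ∈ Set.Icc (min α α') (max α α')
        ∨ z.im ∈ Set.Icc (min β β') (max β β'))) := by
  subst hH hR
  simp only [Set.mem_setOf_eq] at hz ⊢
  have hx := icc_iff_sq α α' z.re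
  have hy := icc_iff_sq β β' z.im
  have key : (z.re - (α + α') / 2) ^ 2 - (α' - α) ^ 2 / 4
      = (z.im - (β + β') / 2) ^ 2 - (β' - β) ^ 2 / 4 := by linarith
  constructor
  · rw [hx, hy]; constructor
    · exact fun h => h.1
    · exact fun h => ⟨h, by linarith⟩
  · rw [hx, hy]; constructor
    · exact fun h => Or.inl h.1
    · rintro (h | h)
      · exact ⟨h, by linarith⟩
      · exact ⟨by linarith, h⟩
end

section
/- Let z = x + iy be a point of the hyperbola H. Then the following are equivalent: (i) z lies in the topological interior of R; (ii) (x − (α+α')/2)² − 𝒜²/4 < 0; (iii) x ∈ (min(α,α'), max(α,α')) or y ∈ (min(β,β'), max(β,β')). -/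

lemma quad_iff (x c c' : ℝ) :
    (x - (c + c') / 2) ^ 2 - (c' - c) ^ 2 / 4 < 0 ↔
      x ∈ Set.Ioo (min c c') (max c c') := by
  rcases le_total c c' with h | h
  · rw [min_eq_left h, max_eq_right h]
    constructor
    · intro hx; exact ⟨by nlinarith, by nlinarith⟩
    · rintro ⟨h1, h2⟩; nlinarith
  · rw [min_eq_right h, max_eq_left h]
    constructor
    · intro hx; exact ⟨by nlinarith, by nlinarith⟩
    · rintro ⟨h1, h2⟩; nlinarith

lemma interior_rect (a b c d : ℝ) (R : Set ℂ)
    (hR : R = {w : ℂ | w.re ∈ Set.Icc a b ∧ w.im ∈ Set.Icc c d}) (z : ℂ) :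
    z ∈ interior R ↔ z.re ∈ Set.Ioo a b ∧ z.im ∈ Set.Ioo c d := by
  constructor
  · intro hzi
    rw [mem_interior_iff_mem_nhds, Metric.mem_nhds_iff] at hzi
    obtain ⟨ε, hε, hball⟩ := hzi
    have hd : ∀ w : ℂ, ‖w‖ < ε → z + w ∈ R := by
      intro w hw
      apply hball
      simpa [Metric.mem_ball, Complex.dist_eq] using hw
    have h1 := hd (ε/2 : ℝ) (by simp [abs_of_pos hε]; linarith)
    have h2 := hd (-(ε/2 : ℝ)) (by simp [abs_of_pos hε]; linarith)
    have h3 := hd ((ε/2 : ℝ) * Complex.I) (by simp [abs_of_pos hε]; linarith)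
    have h4 := hd (-((ε/2 : ℝ) * Complex.I)) (by simp [abs_of_pos hε]; linarith)
    rw [hR] at h1 h2 h3 h4
    simp only [Set.mem_setOf_eq, Complex.add_re, Complex.add_im, Complex.ofReal_re,
      Complex.ofReal_im, Complex.neg_re, Complex.neg_im, Complex.mul_re, Complex.mul_im,
      Complex.I_re, Complex.I_im, Set.mem_Icc] at h1 h2 h3 h4
    constructor
    · constructor <;> [skip; skip] <;> nlinarith [h1.1.1, h1.1.2, h2.1.1, h2.1.2]
    · constructor <;> nlinarith [h3.2.1, h3.2.2, h4.2.1, h4.2.2]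
  · intro ⟨h1, h2⟩
    apply interior_maximal (t := {w : ℂ | w.re ∈ Set.Ioo a b ∧ w.im ∈ Set.Ioo c d})
    · rw [hR]
      rintro w ⟨hw1, hw2⟩
      exact ⟨Set.Ioo_subset_Icc_self hw1, Set.Ioo_subset_Icc_self hw2⟩
    · exact (isOpen_Ioo.preimage Complex.continuous_re).inter
        (isOpen_Ioo.preimage Complex.continuous_im)
    · exact ⟨h1, h2⟩

/-- For `z = x + iy ∈ H`, the conditions (i) `z ∈ interior R`,
(ii) `(x − (α+α')/2)² − 𝒜²/4 < 0`, and
(iii) `x ∈ (min(α,α'), max(α,α'))` or `y ∈ (min(β,β'), max(β,β'))` are equivalent. -/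
theorem stmt_3 (α α' β β' : ℝ) (hα : α ≠ α') (hβ : β ≠ β')
    (H R : Set ℂ)
    (hH : H = {w : ℂ | (w.re - (α + α') / 2) ^ 2 - (w.im - (β + β') / 2) ^ 2
        = ((α' - α) ^ 2 - (β' - β) ^ 2) / 4})
    (hR : R = {w : ℂ | w.re ∈ Set.Icc (min α α') (max α α')
        ∧ w.im ∈ Set.Icc (min β β') (max β β')})
    (z : ℂ) (hz : z ∈ H) :
    (z ∈ interior R ↔ (z.re - (α + α') / 2) ^ 2 - (α' - α) ^ 2 / 4 < 0) ∧
    (z ∈ interior R ↔ (z.re ∈ Set.Ioo (min α α') (max α α')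
        ∨ z.im ∈ Set.Ioo (min β β') (max β β'))) := by
  rw [hH, Set.mem_setOf_eq] at hz
  have hx := quad_iff z.re α α'
  have hy := quad_iff z.im β β'
  have hxy : z.re ∈ Set.Ioo (min α α') (max α α') ↔
      z.im ∈ Set.Ioo (min β β') (max β β') := by
    rw [← hx, ← hy]; constructor <;> intro h <;> linarith
  have hint := interior_rect (min α α') (max α α') (min β β') (max β β') R hR z
  constructor
  · rw [hint, hx]
    constructor
    · exact fun h => h.1
    · exact fun h => ⟨h, hxy.mp h⟩
  · rw [hint]
    constructor
    · exact fun h => Or.inl h.1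
    · rintro (h | h)
      · exact ⟨h, hxy.mp h⟩
      · exact ⟨hxy.mpr h, h⟩
end

section
/- Let z be a point of the hyperbola H. Then z ∈ R if and only if |Im((z − (α+α')/2 − i(β+β')/2)²)| ≤ |𝒜ℬ|/2. -/
lemma icc_abs_aux (a b x : ℝ) :
    (min a b ≤ x ∧ x ≤ max a b) ↔ |x - (a + b) / 2| ≤ |b - a| / 2 := by
  rw [abs_le]
  rcases le_total a b with h | h
  · rw [min_eq_left h, max_eq_right h, abs_of_nonneg (by linarith)]
    constructor <;> rintro ⟨h1, h2⟩ <;> constructor <;> linarith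
  · rw [min_eq_right h, max_eq_left h, abs_of_nonpos (by linarith)]
    constructor <;> rintro ⟨h1, h2⟩ <;> constructor <;> linarith

lemma key_aux (u v a b : ℝ) (ha : 0 ≤ a) (hb : 0 ≤ b)
    (h : u ^ 2 - v ^ 2 = a ^ 2 - b ^ 2) :
    (|u| ≤ a ∧ |v| ≤ b) ↔ |u * v| ≤ a * b := by
  constructor
  · rintro ⟨h1, h2⟩
    rw [abs_mul]
    exact mul_le_mul h1 h2 (abs_nonneg v) ha
  · intro h'
    have hsq : (u * v) ^ 2 ≤ (a * b) ^ 2 := by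
      have := abs_nonneg (u * v)
      nlinarith [sq_abs (u * v)]
    have hu2 : u ^ 2 ≤ a ^ 2 := by nlinarith [sq_nonneg u, sq_nonneg v, sq_nonneg b]
    have hv2 : v ^ 2 ≤ b ^ 2 := by nlinarith [sq_nonneg u, sq_nonneg v, sq_nonneg a]
    constructor
    · nlinarith [abs_nonneg u, sq_abs u]
    · nlinarith [abs_nonneg v, sq_abs v]

/-- For `z ∈ H`, `z ∈ R` iff `|Im((z − (α+α')/2 − i(β+β')/2)²)| ≤ |𝒜ℬ|/2`. -/
theorem stmt_4 (α α' β β' : ℝ) (hα : α ≠ α') (hβ : β ≠ β')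
    (H R : Set ℂ)
    (hH : H = {w : ℂ | (w.re - (α + α') / 2) ^ 2 - (w.im - (β + β') / 2) ^ 2
        = ((α' - α) ^ 2 - (β' - β) ^ 2) / 4})
    (hR : R = {w : ℂ | w.re ∈ Set.Icc (min α α') (max α α')
        ∧ w.im ∈ Set.Icc (min β β') (max β β')})
    (z : ℂ) (hz : z ∈ H) :
    z ∈ R ↔
      |((z - (((α + α') / 2 : ℝ) : ℂ) - Complex.I * (((β + β') / 2 : ℝ) : ℂ)) ^ 2).im|
        ≤ |(α' - α) * (β' - β)| / 2 := by
  subst hH hR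
  simp only [Set.mem_setOf_eq] at hz
  set u := z.re - (α + α') / 2 with hu
  set v := z.im - (β + β') / 2 with hv
  have him : ((z - (((α + α') / 2 : ℝ) : ℂ) - Complex.I * (((β + β') / 2 : ℝ) : ℂ)) ^ 2).im
      = 2 * (u * v) := by
    rw [pow_two]
    simp [Complex.mul_im, Complex.mul_re, Complex.sub_re, Complex.sub_im, hu, hv]
    ring
  rw [him]
  simp only [Set.mem_setOf_eq, Set.mem_Icc]
  rw [icc_abs_aux, icc_abs_aux]
  have hkey := key_aux u v (|α' - α| / 2) (|β' - β| / 2)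
    (by positivity) (by positivity)
    (by rw [div_pow, div_pow, sq_abs, sq_abs]; linarith)
  rw [hkey]
  have h2 : |2 * (u * v)| = 2 * |u * v| := by rw [abs_mul]; norm_num
  rw [h2, abs_mul (α' - α)]
  constructor <;> intro h <;> nlinarith [abs_nonneg (u * v)]
end

section
/- The matrix X̃² satisfies X̃² = ((𝒜² − ℬ²)/4)·I + i(P̃Q̃ + Q̃P̃); consequently X̃² is a normal matrix (it commutes with its conjugate transpose), its Hermitian real part (X̃² + (X̃²)*)/2 equals ((𝒜² − ℬ²)/4)·I, and its Hermitian imaginary part P̃Q̃ + Q̃P̃ satisfies ‖P̃Q̃ + Q̃P̃‖ ≤ |𝒜ℬ|/2. -/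
open Matrix
open scoped Matrix.Norms.L2Operator

/-- `X̃² = ((𝒜² − ℬ²)/4)·I + i(P̃Q̃ + Q̃P̃)`; consequently `X̃²` is normal, its Hermitian
real part equals `((𝒜² − ℬ²)/4)·I`, and its Hermitian imaginary part `P̃Q̃ + Q̃P̃`
has ℓ²→ℓ² operator norm at most `|𝒜ℬ|/2`. -/
theorem stmt_6 (n : ℕ) (hn : 1 ≤ n) (α α' β β' : ℝ)
    (P Q X Ptil Qtil Xtil : Matrix (Fin n) (Fin n) ℂ)
    (hP : P.IsHermitian) (hQ : Q.IsHermitian)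
    (hPs : (P - (α : ℂ) • 1) * (P - (α' : ℂ) • 1) = 0)
    (hQs : (Q - (β : ℂ) • 1) * (Q - (β' : ℂ) • 1) = 0)
    (hX : X = P + Complex.I • Q)
    (hPtil : Ptil = P - ((((α + α') / 2 : ℝ)) : ℂ) • 1)
    (hQtil : Qtil = Q - ((((β + β') / 2 : ℝ)) : ℂ) • 1)
    (hXtil : Xtil = X - (((((α + α') / 2 : ℝ)) : ℂ)
        + Complex.I * ((((β + β') / 2 : ℝ)) : ℂ)) • 1) :
    Xtil ^ 2 = (((((α' - α) ^ 2 - (β' - β) ^ 2) / 4 : ℝ)) : ℂ) • 1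
        + Complex.I • (Ptil * Qtil + Qtil * Ptil) ∧
    Xtil ^ 2 * (Xtil ^ 2)ᴴ = (Xtil ^ 2)ᴴ * Xtil ^ 2 ∧
    (1 / 2 : ℂ) • (Xtil ^ 2 + (Xtil ^ 2)ᴴ)
        = (((((α' - α) ^ 2 - (β' - β) ^ 2) / 4 : ℝ)) : ℂ) • 1 ∧
    ‖Ptil * Qtil + Qtil * Ptil‖ ≤ |(α' - α) * (β' - β)| / 2 := by
  haveI : Nonempty (Fin n) := ⟨⟨0, hn⟩⟩
  -- Ptil² and Qtil² are scalar
  have hPtil2 : Ptil * Ptil = ((((α' - α) / 2 : ℝ))^2 : ℂ) • 1 := by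
    rw [hPtil]
    have expand : (P - ((((α + α') / 2 : ℝ)) : ℂ) • 1) * (P - ((((α + α') / 2 : ℝ)) : ℂ) • 1)
        = (P - (α : ℂ) • 1) * (P - (α' : ℂ) • 1)
          + ((((α' - α) / 2 : ℝ))^2 : ℂ) • 1 := by
      push_cast
      simp only [sub_mul, mul_sub, smul_mul_assoc, mul_smul_comm, one_mul, mul_one, smul_smul]
      match_scalars <;> ring
    rw [expand, hPs, zero_add]
  have hQtil2 : Qtil * Qtil = ((((β' - β) / 2 : ℝ))^2 : ℂ) • 1 := by
    rw [hQtil]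
    have expand : (Q - ((((β + β') / 2 : ℝ)) : ℂ) • 1) * (Q - ((((β + β') / 2 : ℝ)) : ℂ) • 1)
        = (Q - (β : ℂ) • 1) * (Q - (β' : ℂ) • 1)
          + ((((β' - β) / 2 : ℝ))^2 : ℂ) • 1 := by
      push_cast
      simp only [sub_mul, mul_sub, smul_mul_assoc, mul_smul_comm, one_mul, mul_one, smul_smul]
      match_scalars <;> ring
    rw [expand, hQs, zero_add]
  have hXt : Xtil = Ptil + Complex.I • Qtil := by
    rw [hXtil, hX, hPtil, hQtil]
    simp only [add_smul, smul_sub, smul_smul, mul_smul_comm]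
    module
  set r : ℝ := ((α' - α) ^ 2 - (β' - β) ^ 2) / 4 with hr
  set S : Matrix (Fin n) (Fin n) ℂ := Ptil * Qtil + Qtil * Ptil with hS
  have key : Xtil ^ 2 = (r : ℂ) • 1 + Complex.I • S := by
    rw [sq, hXt, hS]
    have : (Ptil + Complex.I • Qtil) * (Ptil + Complex.I • Qtil)
        = Ptil * Ptil + Complex.I • (Ptil * Qtil + Qtil * Ptil)
          + (Complex.I * Complex.I) • (Qtil * Qtil) := by
      simp only [add_mul, mul_add, smul_mul_assoc, mul_smul_comm, smul_smul, smul_add]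
      module
    rw [this, hPtil2, hQtil2, Complex.I_mul_I, hr]
    push_cast
    match_scalars <;> ring
  -- Hermitian facts
  have hPtilH : Ptil.IsHermitian := by
    rw [hPtil]
    exact hP.sub (by simp [Matrix.IsHermitian, conjTranspose_smul, Complex.conj_ofReal])
  have hQtilH : Qtil.IsHermitian := by
    rw [hQtil]
    exact hQ.sub (by simp [Matrix.IsHermitian, conjTranspose_smul, Complex.conj_ofReal])
  have hSH : S.IsHermitian := by
    rw [hS]
    simp [Matrix.IsHermitian, conjTranspose_add, conjTranspose_mul, hPtilH.eq, hQtilH.eq, add_comm]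
  have hconj : (Xtil ^ 2)ᴴ = (r : ℂ) • 1 - Complex.I • S := by
    rw [key]
    simp only [conjTranspose_add, conjTranspose_smul, conjTranspose_one, hSH.eq,
      Complex.conj_I, Complex.conj_ofReal, RCLike.star_def]
    module
  refine ⟨key, ?_, ?_, ?_⟩
  · rw [hconj, key]
    simp only [add_mul, mul_add, sub_mul, mul_sub, smul_mul_assoc, mul_smul_comm, smul_smul,
      one_mul, mul_one]
    module
  · rw [hconj, key]
    match_scalars <;> ring
  · -- norm bound
    have hnP : ‖Ptil‖ = |α' - α| / 2 := by
      have h1 : ‖Ptil‖ * ‖Ptil‖ = (|α' - α| / 2) * (|α' - α| / 2) := by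
        rw [← CStarRing.norm_star_mul_self (x := Ptil)]
        show ‖Ptilᴴ * Ptil‖ = _
        rw [hPtilH.eq, hPtil2, norm_smul, norm_one, mul_one]
        simp [Complex.norm_real, ← Complex.ofReal_sub, Complex.norm_real, abs_mul, abs_abs]
        ring
      nlinarith [norm_nonneg Ptil, abs_nonneg (α' - α), sq_nonneg (‖Ptil‖ - |α' - α| / 2)]
    have hnQ : ‖Qtil‖ = |β' - β| / 2 := by
      have h1 : ‖Qtil‖ * ‖Qtil‖ = (|β' - β| / 2) * (|β' - β| / 2) := by
        rw [← CStarRing.norm_star_mul_self (x := Qtil)]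
        show ‖Qtilᴴ * Qtil‖ = _
        rw [hQtilH.eq, hQtil2, norm_smul, norm_one, mul_one]
        simp [Complex.norm_real, ← Complex.ofReal_sub, Complex.norm_real, abs_mul, abs_abs]
        ring
      nlinarith [norm_nonneg Qtil, abs_nonneg (β' - β), sq_nonneg (‖Qtil‖ - |β' - β| / 2)]
    calc ‖Ptil * Qtil + Qtil * Ptil‖ ≤ ‖Ptil * Qtil‖ + ‖Qtil * Ptil‖ := norm_add_le _ _
      _ ≤ ‖Ptil‖ * ‖Qtil‖ + ‖Qtil‖ * ‖Ptil‖ := by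
          gcongr <;> exact norm_mul_le _ _
      _ = |(α' - α) * (β' - β)| / 2 := by rw [hnP, hnQ, abs_mul]; ring
end

section
/- If ρ ∈ ℂ is an eigenvalue of X̃² (i.e., there exists v ∈ ℂⁿ, v ≠ 0, with X̃²v = ρv), then Re(ρ) = (𝒜² − ℬ²)/4 and |Im(ρ)| ≤ |𝒜ℬ|/2. -/
open Matrix
open scoped InnerProductSpace ComplexConjugate

noncomputable def eqE (n : ℕ) : (Fin n → ℂ) ≃ₗ[ℂ] EuclideanSpace ℂ (Fin n) :=
  (WithLp.linearEquiv 2 ℂ (Fin n → ℂ)).symm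

lemma inner_eqE (n : ℕ) (x y : Fin n → ℂ) :
    ⟪eqE n x, eqE n y⟫_ℂ = dotProduct (star x) y := by
  simp [eqE, dotProduct, PiLp.inner_apply, mul_comm]

lemma herm_inner (n : ℕ) (M : Matrix (Fin n) (Fin n) ℂ) (hM : Mᴴ = M) (x y : Fin n → ℂ) :
    ⟪eqE n (M *ᵥ x), eqE n y⟫_ℂ = ⟪eqE n x, eqE n (M *ᵥ y)⟫_ℂ := by
  rw [inner_eqE, inner_eqE, Matrix.star_mulVec, hM, Matrix.dotProduct_mulVec]

lemma norm_mulVec_eq (n : ℕ) (M : Matrix (Fin n) (Fin n) ℂ) (s : ℝ) (hM : Mᴴ = M)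
    (hM2 : M * M = ((s : ℂ) ^ 2) • 1) (x : Fin n → ℂ) :
    ‖eqE n (M *ᵥ x)‖ = |s| * ‖eqE n x‖ := by
  have h1 : ⟪eqE n (M *ᵥ x), eqE n (M *ᵥ x)⟫_ℂ = (s : ℂ) ^ 2 * ⟪eqE n x, eqE n x⟫_ℂ := by
    rw [herm_inner n M hM, Matrix.mulVec_mulVec, hM2]
    simp [Matrix.smul_mulVec, _root_.map_smul, inner_smul_right]
  have h2 : ‖eqE n (M *ᵥ x)‖ ^ 2 = (|s| * ‖eqE n x‖) ^ 2 := by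
    rw [inner_self_eq_norm_sq_to_K, inner_self_eq_norm_sq_to_K] at h1
    have h3 : ‖eqE n (M *ᵥ x)‖ ^ 2 = s ^ 2 * ‖eqE n x‖ ^ 2 :=
      RCLike.ofReal_injective (K := ℂ) (by push_cast; exact h1)
    rw [h3, mul_pow, sq_abs]
  rw [sq_eq_sq_iff_abs_eq_abs] at h2
  rwa [abs_norm, abs_of_nonneg (by positivity)] at h2

lemma norm_inner_self (n : ℕ) (x : Fin n → ℂ) : ‖⟪eqE n x, eqE n x⟫_ℂ‖ = ‖eqE n x‖ ^ 2 := by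
  rw [← inner_self_re_eq_norm, inner_self_eq_norm_sq]

lemma square_lemma (n : ℕ) (R : Matrix (Fin n) (Fin n) ℂ) (γ γ' : ℝ)
    (h : (R - (γ : ℂ) • 1) * (R - (γ' : ℂ) • 1) = 0) :
    (R - ((((γ + γ') / 2 : ℝ)) : ℂ) • 1) * (R - ((((γ + γ') / 2 : ℝ)) : ℂ) • 1)
      = (((((γ' - γ) / 2 : ℝ)) : ℂ) ^ 2) • 1 := by
  have key : (R - ((((γ + γ') / 2 : ℝ)) : ℂ) • 1) * (R - ((((γ + γ') / 2 : ℝ)) : ℂ) • 1)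
      - (((((γ' - γ) / 2 : ℝ)) : ℂ) ^ 2) • 1 = (R - (γ : ℂ) • 1) * (R - (γ' : ℂ) • 1) := by
    simp only [sub_mul, mul_sub, smul_mul_assoc, mul_smul_comm, mul_one, one_mul, smul_smul]
    push_cast
    module
  rw [h] at key
  rwa [sub_eq_zero] at key

/-- If `ρ` is an eigenvalue of `X̃²`, then `Re(ρ) = (𝒜² − ℬ²)/4` and `|Im(ρ)| ≤ |𝒜ℬ|/2`. -/
theorem stmt_7 (n : ℕ) (hn : 1 ≤ n) (α α' β β' : ℝ)
    (P Q X Xtil : Matrix (Fin n) (Fin n) ℂ)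
    (hP : P.IsHermitian) (hQ : Q.IsHermitian)
    (hPs : (P - (α : ℂ) • 1) * (P - (α' : ℂ) • 1) = 0)
    (hQs : (Q - (β : ℂ) • 1) * (Q - (β' : ℂ) • 1) = 0)
    (hX : X = P + Complex.I • Q)
    (hXtil : Xtil = X - (((((α + α') / 2 : ℝ)) : ℂ)
        + Complex.I * ((((β + β') / 2 : ℝ)) : ℂ)) • 1)
    (ρ : ℂ) (v : Fin n → ℂ) (hv : v ≠ 0)
    (heig : (Xtil ^ 2) *ᵥ v = ρ • v) :
    ρ.re = ((α' - α) ^ 2 - (β' - β) ^ 2) / 4 ∧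
      |ρ.im| ≤ |(α' - α) * (β' - β)| / 2 := by
  set Pt : Matrix (Fin n) (Fin n) ℂ := P - ((((α + α') / 2 : ℝ)) : ℂ) • 1 with hPtdef
  set Qt : Matrix (Fin n) (Fin n) ℂ := Q - ((((β + β') / 2 : ℝ)) : ℂ) • 1 with hQtdef
  have hPt2 : Pt * Pt = (((((α' - α) / 2 : ℝ)) : ℂ) ^ 2) • 1 := square_lemma n P α α' hPs
  have hQt2 : Qt * Qt = (((((β' - β) / 2 : ℝ)) : ℂ) ^ 2) • 1 := square_lemma n Q β β' hQs
  have hPtH : Ptᴴ = Pt := by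
    simp [hPtdef, Matrix.conjTranspose_sub, Matrix.conjTranspose_smul,
      Matrix.conjTranspose_one, hP.eq, Complex.star_def, Complex.conj_ofReal]
  have hQtH : Qtᴴ = Qt := by
    simp [hQtdef, Matrix.conjTranspose_sub, Matrix.conjTranspose_smul,
      Matrix.conjTranspose_one, hQ.eq, Complex.star_def, Complex.conj_ofReal]
  set S : Matrix (Fin n) (Fin n) ℂ := Pt * Qt + Qt * Pt with hSdef
  have hSH : Sᴴ = S := by
    simp only [hSdef, Matrix.conjTranspose_add, Matrix.conjTranspose_mul, hPtH, hQtH]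
    abel
  set rc : ℂ := (((((α' - α) / 2 : ℝ)) : ℂ) ^ 2) - (((((β' - β) / 2 : ℝ)) : ℂ) ^ 2) with hrc
  have hXt : Xtil = Pt + Complex.I • Qt := by
    rw [hXtil, hX, hPtdef, hQtdef]
    module
  have hXt2 : Xtil ^ 2 = rc • 1 + Complex.I • S := by
    rw [sq, hXt, hrc, hSdef]
    have expand : (Pt + Complex.I • Qt) * (Pt + Complex.I • Qt)
        = Pt * Pt + Complex.I • (Pt * Qt) + Complex.I • (Qt * Pt)
          + (Complex.I * Complex.I) • (Qt * Qt) := by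
      simp only [add_mul, mul_add, smul_mul_assoc, mul_smul_comm, smul_add, smul_smul]
      abel
    rw [expand, Complex.I_mul_I, hPt2, hQt2]
    module
  -- eigen-equation for S
  rw [hXt2] at heig
  rw [Matrix.add_mulVec, Matrix.smul_mulVec, Matrix.smul_mulVec,
    Matrix.one_mulVec] at heig
  set μ : ℂ := -Complex.I * (ρ - rc) with hμ
  have hSv : S *ᵥ v = μ • v := by
    have h1 : Complex.I • (S *ᵥ v) = (ρ - rc) • v := by
      rw [sub_smul]
      exact eq_sub_of_add_eq' heig
    have h2 : ((-Complex.I) * Complex.I) • (S *ᵥ v) = ((-Complex.I) * (ρ - rc)) • v := by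
      rw [← smul_smul, ← smul_smul, h1]
    rw [neg_mul, Complex.I_mul_I, neg_neg, one_smul] at h2
    rw [h2, hμ]
  -- basic nonvanishing
  have hEv : eqE n v ≠ 0 := by
    intro h
    exact hv (by simpa using congrArg (eqE n).symm h)
  have hnv : ‖eqE n v‖ ≠ 0 := by simpa [norm_eq_zero] using hEv
  have hPnorm : ‖eqE n (Pt *ᵥ v)‖ = |(α' - α) / 2| * ‖eqE n v‖ :=
    norm_mulVec_eq n Pt ((α' - α) / 2) hPtH hPt2 v
  have hQnorm : ‖eqE n (Qt *ᵥ v)‖ = |(β' - β) / 2| * ‖eqE n v‖ :=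
    norm_mulVec_eq n Qt ((β' - β) / 2) hQtH hQt2 v
  -- inner product of v with S v
  have hinner : ⟪eqE n v, eqE n (S *ᵥ v)⟫_ℂ = μ * ⟪eqE n v, eqE n v⟫_ℂ := by
    rw [hSv, _root_.map_smul, inner_smul_right]
  have hinner_ne : ⟪eqE n v, eqE n v⟫_ℂ ≠ 0 := by
    rw [ne_eq, inner_self_eq_zero]
    exact hEv
  -- realness of μ
  have hμreal : μ.im = 0 := by
    have hc : conj ⟪eqE n v, eqE n (S *ᵥ v)⟫_ℂ = ⟪eqE n v, eqE n (S *ᵥ v)⟫_ℂ := by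
      rw [inner_conj_symm]
      exact herm_inner n S hSH v v
    rw [hinner, _root_.map_mul, inner_self_conj] at hc
    have : conj μ = μ := mul_right_cancel₀ hinner_ne hc
    have h := congrArg Complex.im this
    simp only [Complex.conj_im] at h
    linarith
  -- ρ in terms of μ
  have hρ : ρ = rc + Complex.I * μ := by
    rw [hμ]
    linear_combination (ρ - rc) * Complex.I_sq
  have hrc' : rc = ((((α' - α) / 2) ^ 2 - ((β' - β) / 2) ^ 2 : ℝ) : ℂ) := by
    rw [hrc]; push_cast; ring
  have hre : ρ.re = ((α' - α) ^ 2 - (β' - β) ^ 2) / 4 := by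
    rw [hρ, hrc']
    simp only [Complex.add_re, Complex.ofReal_re, Complex.mul_re, Complex.I_re,
      Complex.I_im, hμreal, zero_mul, mul_zero, one_mul, sub_zero, add_zero]
    ring
  refine ⟨hre, ?_⟩
  have him : ρ.im = μ.re := by
    rw [hρ, hrc']
    simp only [Complex.add_im, Complex.ofReal_im, Complex.mul_im, Complex.I_re,
      Complex.I_im, hμreal, mul_zero, zero_mul, one_mul, zero_add, add_zero]
  -- bound
  have hboundC : ‖⟪eqE n v, eqE n (S *ᵥ v)⟫_ℂ‖ ≤
      2 * (|(α' - α) / 2| * |(β' - β) / 2|) * ‖eqE n v‖ ^ 2 := by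
    have hsv : S *ᵥ v = Pt *ᵥ (Qt *ᵥ v) + Qt *ᵥ (Pt *ᵥ v) := by
      rw [hSdef, Matrix.add_mulVec, Matrix.mulVec_mulVec, Matrix.mulVec_mulVec]
    have hsplit : ⟪eqE n v, eqE n (S *ᵥ v)⟫_ℂ
        = ⟪eqE n (Pt *ᵥ v), eqE n (Qt *ᵥ v)⟫_ℂ + ⟪eqE n (Qt *ᵥ v), eqE n (Pt *ᵥ v)⟫_ℂ := by
      rw [hsv, _root_.map_add, inner_add_right,
        ← herm_inner n Pt hPtH v (Qt *ᵥ v), ← herm_inner n Qt hQtH v (Pt *ᵥ v)]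
    rw [hsplit]
    calc ‖⟪eqE n (Pt *ᵥ v), eqE n (Qt *ᵥ v)⟫_ℂ + ⟪eqE n (Qt *ᵥ v), eqE n (Pt *ᵥ v)⟫_ℂ‖
        ≤ ‖⟪eqE n (Pt *ᵥ v), eqE n (Qt *ᵥ v)⟫_ℂ‖ + ‖⟪eqE n (Qt *ᵥ v), eqE n (Pt *ᵥ v)⟫_ℂ‖ :=
          norm_add_le _ _
      _ ≤ ‖eqE n (Pt *ᵥ v)‖ * ‖eqE n (Qt *ᵥ v)‖ + ‖eqE n (Qt *ᵥ v)‖ * ‖eqE n (Pt *ᵥ v)‖ := by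
          gcongr <;> exact norm_inner_le_norm _ _
      _ = 2 * (|(α' - α) / 2| * |(β' - β) / 2|) * ‖eqE n v‖ ^ 2 := by
          rw [hPnorm, hQnorm]; ring
  have hμeq : μ = ((μ.re : ℝ) : ℂ) := by
    apply Complex.ext <;> simp [hμreal]
  have habs : ‖⟪eqE n v, eqE n (S *ᵥ v)⟫_ℂ‖ = |μ.re| * ‖eqE n v‖ ^ 2 := by
    rw [hinner, norm_mul, norm_inner_self]
    congr 1
    rw [hμeq]
    simp [Complex.norm_real]
  rw [habs] at hboundC
  have hfin : |μ.re| ≤ 2 * (|(α' - α) / 2| * |(β' - β) / 2|) := by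
    have hpos : (0:ℝ) < ‖eqE n v‖ ^ 2 := by
      have := hnv
      positivity
    exact le_of_mul_le_mul_right (by linarith [hboundC]) hpos
  rw [him]
  calc |μ.re| ≤ 2 * (|(α' - α) / 2| * |(β' - β) / 2|) := hfin
    _ = |(α' - α) * (β' - β)| / 2 := by
        rw [abs_div, abs_div, abs_mul]
        norm_num
        ring
end

section
/- Assume moreover α ≠ α' and β ≠ β'. Every eigenvalue λ of X = P + iQ lies in H ∩ R; explicitly, if there exists v ≠ 0 with Xv = λv, then (Re λ − α)(Re λ − α') = (Im λ − β)(Im λ − β'), Re λ ∈ [min(α,α'), max(α,α')], and Im λ ∈ [min(β,β'), max(β,β')]. -/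
open Matrix

lemma conjdot {n : ℕ} (M : Matrix (Fin n) (Fin n) ℂ) (v : Fin n → ℂ) :
    star (star v ⬝ᵥ (M *ᵥ v)) = star v ⬝ᵥ (Mᴴ *ᵥ v) := by
  rw [star_dotProduct, star_star, star_mulVec, ← dotProduct_mulVec]

lemma dotself {n : ℕ} (w : Fin n → ℂ) :
    star w ⬝ᵥ w = ((∑ i, Complex.normSq (w i) : ℝ) : ℂ) := by
  push_cast
  simp [dotProduct, Complex.normSq_eq_conj_mul_self]

lemma dotself_re_nonneg {n : ℕ} (w : Fin n → ℂ) : 0 ≤ (star w ⬝ᵥ w).re := by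
  rw [dotself, Complex.ofReal_re]
  exact Finset.sum_nonneg fun j _ => Complex.normSq_nonneg _

lemma dotself_re_pos {n : ℕ} (w : Fin n → ℂ) (hw : w ≠ 0) :
    0 < (star w ⬝ᵥ w).re := by
  rw [dotself, Complex.ofReal_re]
  have : ∃ i, w i ≠ 0 := by
    by_contra h; push_neg at h; exact hw (funext h)
  obtain ⟨i, hi⟩ := this
  exact Finset.sum_pos' (fun j _ => Complex.normSq_nonneg _)
    ⟨i, Finset.mem_univ i, Complex.normSq_pos.mpr hi⟩

lemma expand2 {n : ℕ} (P : Matrix (Fin n) (Fin n) ℂ) (γ γ' : ℂ) :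
    (P - γ • 1) * (P - γ' • 1) = P * P - ((γ + γ') • P - (γ * γ') • 1) := by
  simp only [mul_sub, sub_mul, mul_smul_comm, smul_mul_assoc, mul_one, one_mul, smul_smul,
    add_smul]
  module

lemma bound {n : ℕ} (P : Matrix (Fin n) (Fin n) ℂ) (hP : P.IsHermitian) (γ γ' : ℝ)
    (hPs : (P - (γ:ℂ) • 1) * (P - (γ':ℂ) • 1) = 0) (v : Fin n → ℂ) :
    0 ≤ (γ' - γ) * ((star v ⬝ᵥ (P *ᵥ v)).re - γ * (star v ⬝ᵥ v).re) := by
  set A : Matrix (Fin n) (Fin n) ℂ := P - (γ:ℂ) • 1 with hA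
  have hAH : Aᴴ = A := by
    simp [hA, conjTranspose_smul, hP.eq, Complex.conj_ofReal]
  have hsq : A * A = (((γ' - γ : ℝ)):ℂ) • A := by
    have h1 : A * A = A * (P - (γ':ℂ) • 1) + (((γ':ℂ) - (γ:ℂ)) • A) := by
      simp only [hA, mul_sub, mul_smul_comm, mul_one]
      module
    rw [h1, hPs, zero_add]
    push_cast
    ring_nf
  have hN : star (A *ᵥ v) ⬝ᵥ (A *ᵥ v)
      = (((γ' - γ : ℝ)):ℂ) * (star v ⬝ᵥ (A *ᵥ v)) := by
    rw [star_mulVec, hAH, ← dotProduct_mulVec, mulVec_mulVec, hsq, smul_mulVec,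
      dotProduct_smul, smul_eq_mul]
  have hd : star v ⬝ᵥ (A *ᵥ v) = star v ⬝ᵥ (P *ᵥ v) - (γ:ℂ) * (star v ⬝ᵥ v) := by
    rw [hA, sub_mulVec, smul_mulVec, one_mulVec, dotProduct_sub, dotProduct_smul,
      smul_eq_mul]
  have h0 := dotself_re_nonneg (A *ᵥ v)
  rw [hN, hd] at h0
  simpa [Complex.mul_re, Complex.sub_re, Complex.sub_im, Complex.ofReal_re,
    Complex.ofReal_im] using h0

lemma real_bnd (γ γ' xr S pr : ℝ) (hS : 0 < S) (hpr : xr * S = pr)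
    (b1 : 0 ≤ (γ' - γ) * (pr - γ * S)) (b2 : 0 ≤ (γ - γ') * (pr - γ' * S)) (hne : γ ≠ γ') :
    min γ γ' ≤ xr ∧ xr ≤ max γ γ' := by
  rcases lt_or_gt_of_ne hne with h | h
  · rw [min_eq_left h.le, max_eq_right h.le]
    constructor <;> nlinarith [b1, b2, hpr, hS, mul_pos (sub_pos.mpr h) hS]
  · rw [min_eq_right h.le, max_eq_left h.le]
    constructor <;> nlinarith [b1, b2, hpr, hS, mul_pos (sub_pos.mpr h) hS]

/-- Every eigenvalue `λ` of `X = P + iQ` lies in `H ∩ R`: explicitly,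
`(Re λ − α)(Re λ − α') = (Im λ − β)(Im λ − β')`, `Re λ ∈ [min(α,α'), max(α,α')]`,
and `Im λ ∈ [min(β,β'), max(β,β')]`. -/
theorem stmt_8 (n : ℕ) (hn : 1 ≤ n) (α α' β β' : ℝ)
    (hα : α ≠ α') (hβ : β ≠ β')
    (P Q X : Matrix (Fin n) (Fin n) ℂ)
    (hP : P.IsHermitian) (hQ : Q.IsHermitian)
    (hPs : (P - (α : ℂ) • 1) * (P - (α' : ℂ) • 1) = 0)
    (hQs : (Q - (β : ℂ) • 1) * (Q - (β' : ℂ) • 1) = 0)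
    (hX : X = P + Complex.I • Q)
    (lam : ℂ) (v : Fin n → ℂ) (hv : v ≠ 0)
    (heig : X *ᵥ v = lam • v) :
    (lam.re - α) * (lam.re - α') = (lam.im - β) * (lam.im - β') ∧
    lam.re ∈ Set.Icc (min α α') (max α α') ∧
    lam.im ∈ Set.Icc (min β β') (max β β') := by
  set s := star v ⬝ᵥ v with hs
  set p := star v ⬝ᵥ (P *ᵥ v) with hpdef
  set q := star v ⬝ᵥ (Q *ᵥ v) with hqdef
  set S := s.re with hSdef
  have hS : 0 < S := dotself_re_pos v hv
  have hsr : s = (S : ℂ) := by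
    rw [hs, dotself]; rw [hSdef, hs, dotself, Complex.ofReal_re]
  have hpim : p.im = 0 := by
    have h := conjdot P v
    rw [hP.eq] at h
    have : (starRingEnd ℂ) p = p := h
    exact Complex.conj_eq_iff_im.mp this
  have hqim : q.im = 0 := by
    have h := conjdot Q v
    rw [hQ.eq] at h
    have : (starRingEnd ℂ) q = q := h
    exact Complex.conj_eq_iff_im.mp this
  have hA : lam * s = p + Complex.I * q := by
    have h1 : star v ⬝ᵥ (X *ᵥ v) = lam * s := by
      rw [heig, dotProduct_smul, smul_eq_mul]
    rw [← h1, hX, add_mulVec, smul_mulVec, dotProduct_add, dotProduct_smul, smul_eq_mul]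
  rw [hsr] at hA
  have hpr := congrArg Complex.re hA
  have hqr := congrArg Complex.im hA
  simp only [Complex.mul_re, Complex.mul_im, Complex.add_re, Complex.add_im,
    Complex.I_re, Complex.I_im, Complex.ofReal_re, Complex.ofReal_im,
    hpim, hqim] at hpr hqr
  ring_nf at hpr hqr
  -- hpr : lam.re * S = p.re ; hqr : S * lam.im = q.re
  -- Bounds for P
  have hPsw : (P - (α':ℂ) • 1) * (P - (α:ℂ) • 1) = 0 := by
    rw [expand2]
    rw [expand2] at hPs
    rw [← hPs]; ring_nf
  have hQsw : (Q - (β':ℂ) • 1) * (Q - (β:ℂ) • 1) = 0 := by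
    rw [expand2]
    rw [expand2] at hQs
    rw [← hQs]; ring_nf
  have b1 := bound P hP α α' hPs v
  have b2 := bound P hP α' α hPsw v
  have b3 := bound Q hQ β β' hQs v
  have b4 := bound Q hQ β' β hQsw v
  rw [← hpdef, ← hs, ← hSdef] at b1 b2
  rw [← hqdef, ← hs, ← hSdef] at b3 b4
  -- Hyperbola
  set Y : Matrix (Fin n) (Fin n) ℂ := P - Complex.I • Q with hY
  have hXH : Xᴴ = Y := by
    rw [hX, hY]
    simp [conjTranspose_add, conjTranspose_smul, hP.eq, hQ.eq, Complex.conj_I,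
      sub_eq_add_neg, neg_smul]
  have hP2 : P * P = ((α + α' : ℂ)) • P - ((α * α' : ℂ)) • 1 := by
    rw [expand2] at hPs
    exact sub_eq_zero.mp hPs
  have hQ2 : Q * Q = ((β + β' : ℂ)) • Q - ((β * β' : ℂ)) • 1 := by
    rw [expand2] at hQs
    exact sub_eq_zero.mp hQs
  have hM : X * X + Y * Y
      = (((2*(α+α') : ℝ)):ℂ) • P - (((2*(β+β') : ℝ)):ℂ) • Q
        + (((2*(β*β') - 2*(α*α') : ℝ)):ℂ) • 1 := by
    rw [hX, hY]
    simp only [add_mul, mul_add, sub_mul, mul_sub, mul_smul_comm, smul_mul_assoc, smul_smul,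
      Complex.I_mul_I, neg_smul, one_smul]
    rw [hP2, hQ2]
    push_cast
    match_scalars <;> (ring_nf; try simp [Complex.I_sq]; try ring_nf)
  have ht : star v ⬝ᵥ ((X * X) *ᵥ v) = lam * lam * s := by
    rw [← mulVec_mulVec, heig, mulVec_smul, heig, smul_smul, dotProduct_smul, smul_eq_mul]
  have htc : star (star v ⬝ᵥ ((X * X) *ᵥ v)) = star v ⬝ᵥ ((Y * Y) *ᵥ v) := by
    rw [conjdot, conjTranspose_mul, hXH]
  have hsum : lam * lam * s + star (lam * lam * s)
      = (((2*(α+α') : ℝ)):ℂ) * p - (((2*(β+β') : ℝ)):ℂ) * q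
        + (((2*(β*β') - 2*(α*α') : ℝ)):ℂ) * s := by
    rw [← ht, htc, ← dotProduct_add, ← add_mulVec, hM]
    simp only [add_mulVec, sub_mulVec, smul_mulVec, one_mulVec, dotProduct_add,
      dotProduct_sub, dotProduct_smul, smul_eq_mul]
    rfl
  rw [hsr] at hsum
  have hE := congrArg Complex.re hsum
  simp only [Complex.add_re, Complex.sub_re, Complex.mul_re, Complex.mul_im,
    Complex.conj_re, Complex.ofReal_re, Complex.ofReal_im, Complex.star_def,
    hpim, hqim] at hE
  ring_nf at hE
  have hfac : ((lam.re - α) * (lam.re - α') - (lam.im - β) * (lam.im - β')) * (2 * S) = 0 := by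
    linear_combination hE - (2*(α+α')) * hpr + (2*(β+β')) * hqr
  have h2S : (2 * S) ≠ 0 := by positivity
  have hhyp : (lam.re - α) * (lam.re - α') = (lam.im - β) * (lam.im - β') := by
    have := (mul_eq_zero.mp hfac).resolve_right h2S
    linarith
  refine ⟨hhyp, ?_, ?_⟩
  · rw [Set.mem_Icc]
    exact real_bnd α α' lam.re S p.re hS hpr b1 b2 hα
  · rw [Set.mem_Icc]
    exact real_bnd β β' lam.im S q.re hS (by linarith) b3 b4 hβ
end

section
/- Let z ∈ ℂ and let w ∈ ℂ with w ≠ 0, and set λ₊ = c + w, λ₋ = c − w. Then for every v ∈ ℂⁿ with X̃²v = w²·v one has ‖z·I − X‖ · ‖(z·I − X)v‖ ≥ (min(|z − λ₊|, |z − λ₋|))² · ‖v‖. -/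
open Matrix ContinuousLinearMap
open scoped Matrix.Norms.L2Operator ComplexInnerProductSpace

section aux

variable {n : ℕ}

local notation "E" => EuclideanSpace ℂ (Fin n)

lemma aux_norm_combo (e₁ e₂ : E) (he₁ : ‖e₁‖ = 1) (he₂ : ‖e₂‖ = 1)
    (h12 : ⟪e₁, e₂⟫ = 0) (a b : ℂ) :
    ‖a • e₁ + b • e₂‖ ^ 2 = ‖a‖ ^ 2 + ‖b‖ ^ 2 := by
  rw [@norm_add_sq ℂ]
  rw [inner_smul_left, inner_smul_right, h12]
  simp [norm_smul, he₁, he₂]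

lemma aux_inner_combo₁ (e₁ e₂ : E) (he₁ : ‖e₁‖ = 1)
    (h12 : ⟪e₁, e₂⟫ = 0) (a b : ℂ) :
    ⟪e₁, a • e₁ + b • e₂⟫ = a := by
  have h11 : ⟪e₁, e₁⟫ = 1 := by
    rw [inner_self_eq_norm_sq_to_K, he₁]; norm_num
  rw [inner_add_right, inner_smul_right, inner_smul_right, h11, h12]
  ring

lemma aux_inner_combo₂ (e₁ e₂ : E) (he₂ : ‖e₂‖ = 1)
    (h12 : ⟪e₁, e₂⟫ = 0) (a b : ℂ) :
    ⟪e₂, a • e₁ + b • e₂⟫ = b := by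
  have h22 : ⟪e₂, e₂⟫ = 1 := by
    rw [inner_self_eq_norm_sq_to_K, he₂]; norm_num
  have h21 : ⟪e₂, e₁⟫ = 0 := by
    rw [← inner_conj_symm, h12, map_zero]
  rw [inner_add_right, inner_smul_right, inner_smul_right, h22, h21]
  ring


lemma aux_sq_eq {a b : ℝ} (ha : 0 ≤ a) (hb : 0 ≤ b) (h : a ^ 2 = b ^ 2) : a = b := by
  rw [← Real.sqrt_sq ha, ← Real.sqrt_sq hb, h]

lemma aux_key (M : E →L[ℂ] E) (μ ν γ v₁ v₂ : ℂ) (v e₁ e₂ : E)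
    (he₁ : ‖e₁‖ = 1) (he₂ : ‖e₂‖ = 1) (h12 : ⟪e₁, e₂⟫ = 0)
    (hvc : v = v₁ • e₁ + v₂ • e₂)
    (hM1 : M e₁ = μ • e₁) (hM2 : M e₂ = γ • e₁ + ν • e₂) :
    ‖μ‖ * ‖ν‖ * ‖v‖ ≤ ‖M‖ * ‖M v‖ := by
  classical
  set k : ℂ := μ * ν with hk
  set x₁ : ℂ := μ * v₁ + γ * v₂ with hx₁
  set x₂ : ℂ := ν * v₂ with hx₂
  have hx : M v = x₁ • e₁ + x₂ • e₂ := by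
    rw [hvc, map_add, _root_.map_smul, _root_.map_smul, hM1, hM2, hx₁, hx₂]
    module
  set y : E := (-(starRingEnd ℂ x₂)) • e₁ + (starRingEnd ℂ x₁) • e₂ with hy
  set ζ : E := (-(starRingEnd ℂ (k * v₂))) • e₁ + (starRingEnd ℂ (k * v₁)) • e₂ with hζ
  set A := ContinuousLinearMap.adjoint M with hA
  have hAy1 : ⟪e₁, A y⟫ = -(starRingEnd ℂ (k * v₂)) := by
    rw [hA, adjoint_inner_right, hM1, inner_smul_left, hy,
      aux_inner_combo₁ e₁ e₂ he₁ h12, hx₂, hk]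
    simp only [_root_.map_mul, map_neg]
    ring
  have hAy2 : ⟪e₂, A y⟫ = starRingEnd ℂ (k * v₁) := by
    rw [hA, adjoint_inner_right, hM2, inner_add_left, inner_smul_left, inner_smul_left, hy,
      aux_inner_combo₁ e₁ e₂ he₁ h12, aux_inner_combo₂ e₁ e₂ he₂ h12, hx₁, hx₂, hk]
    simp only [_root_.map_mul, _root_.map_add, map_neg]
    ring
  have hip : ⟪ζ, A y⟫ = ((‖k * v₂‖ ^ 2 + ‖k * v₁‖ ^ 2 : ℝ) : ℂ) := by
    rw [hζ, inner_add_left, inner_smul_left, inner_smul_left, hAy1, hAy2]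
    simp only [map_neg, Complex.conj_conj]
    rw [show (‖k * v₂‖ ^ 2 + ‖k * v₁‖ ^ 2 : ℝ) =
        (Complex.normSq (k * v₂) + Complex.normSq (k * v₁) : ℝ) from by
      rw [Complex.normSq_eq_norm_sq, Complex.normSq_eq_norm_sq]]
    push_cast
    rw [← Complex.mul_conj, ← Complex.mul_conj]
    ring
  have hζnorm2 : ‖ζ‖ ^ 2 = ‖k * v₂‖ ^ 2 + ‖k * v₁‖ ^ 2 := by
    rw [hζ, aux_norm_combo e₁ e₂ he₁ he₂ h12]
    simp [Complex.norm_conj]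
  have hynorm : ‖y‖ = ‖M v‖ := by
    apply aux_sq_eq (norm_nonneg _) (norm_nonneg _)
    rw [hx, hy, aux_norm_combo e₁ e₂ he₁ he₂ h12, aux_norm_combo e₁ e₂ he₁ he₂ h12]
    simp [Complex.norm_conj]
    ring
  have hζnorm : ‖ζ‖ = ‖k‖ * ‖v‖ := by
    apply aux_sq_eq (norm_nonneg _) (by positivity)
    rw [hζnorm2, mul_pow, hvc, aux_norm_combo e₁ e₂ he₁ he₂ h12]
    simp only [norm_mul]
    ring
  have h1 : ‖ζ‖ ^ 2 ≤ ‖M‖ * ‖ζ‖ * ‖y‖ := by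
    have e1 : ‖ζ‖ ^ 2 = ‖⟪ζ, A y⟫‖ := by
      rw [hip, hζnorm2, Complex.norm_real, Real.norm_of_nonneg (by positivity)]
    have e2 : ⟪ζ, A y⟫ = ⟪M ζ, y⟫ := by rw [hA, adjoint_inner_right]
    calc ‖ζ‖ ^ 2 = ‖⟪M ζ, y⟫‖ := by rw [e1, e2]
      _ ≤ ‖M ζ‖ * ‖y‖ := by
          rw [show ‖⟪M ζ, y⟫‖ = ‖⟪M ζ, y⟫‖ from rfl]
          exact norm_inner_le_norm _ _
      _ ≤ ‖M‖ * ‖ζ‖ * ‖y‖ :=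
          mul_le_mul_of_nonneg_right (M.le_opNorm ζ) (norm_nonneg y)
  have hcomb : ‖μ‖ * ‖ν‖ * ‖v‖ = ‖k‖ * ‖v‖ := by
    rw [hk, norm_mul]
  rw [hcomb]
  rcases eq_or_lt_of_le (show (0:ℝ) ≤ ‖k‖ * ‖v‖ by positivity) with h0 | h0
  · rw [← h0]; positivity
  · rw [← hζnorm] at h0 ⊢
    rw [hynorm] at h1
    nlinarith [norm_nonneg (M v), norm_nonneg M]



lemma aux_main (M T : E →L[ℂ] E) (s w : ℂ) (hw : w ≠ 0)
    (hM : ∀ x : E, M x = s • x - T x)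
    (v : E) (hv : T (T v) = w ^ 2 • v) :
    ‖s - w‖ * ‖s + w‖ * ‖v‖ ≤ ‖M‖ * ‖M v‖ ∨
      (M v = (s - w) • v ∨ M v = (s + w) • v) := by
  classical
  set t := T v with ht
  set up : E := t + w • v with hup
  set um : E := t - w • v with hum
  rcases eq_or_ne um 0 with hmz | hmz
  · -- T v = w • v
    right; left
    have htv : t = w • v := by
      have := hmz; rw [hum, sub_eq_zero] at this; exact this
    rw [hM, ← ht, htv]; module
  rcases eq_or_ne up 0 with hpz | hpz
  · right; right
    have htv : t = -(w • v) := by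
      have := hpz; rw [hup, add_eq_zero_iff_eq_neg] at this; exact this
    rw [hM, ← ht, htv]; module
  left
  have hTup : T up = w • up := by
    rw [hup, map_add, _root_.map_smul, ← ht, hv, ht]; module
  have hTum : T um = -w • um := by
    rw [hum, map_sub, _root_.map_smul, ← ht, hv, ht]; module
  have hMup : M up = (s - w) • up := by rw [hM, hTup]; module
  have hMum : M um = (s + w) • um := by rw [hM, hTum]; module
  -- orthonormal basis of span(up, um)
  set ρ : ℝ := ‖up‖ with hρdef
  have hρ : ρ ≠ 0 := by simpa [hρdef] using hpz
  have hρc : (ρ : ℂ) ≠ 0 := by exact_mod_cast hρ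
  set e₁ : E := ((ρ : ℂ))⁻¹ • up with he₁def
  have he₁ : ‖e₁‖ = 1 := by
    rw [he₁def, norm_smul]
    simp [hρdef]
    exact inv_mul_cancel₀ (norm_ne_zero_iff.mpr hpz)
  have hupe : up = (ρ : ℂ) • e₁ := by
    rw [he₁def, smul_smul, mul_inv_cancel₀ hρc, one_smul]
  have hMe₁ : M e₁ = (s - w) • e₁ := by
    rw [he₁def, _root_.map_smul, hMup, smul_comm]
  set α : ℂ := ⟪e₁, um⟫ with hα
  set d : E := um - α • e₁ with hd
  have h11 : ⟪e₁, e₁⟫ = 1 := by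
    rw [inner_self_eq_norm_sq_to_K, he₁]; norm_num
  have hde₁ : ⟪e₁, d⟫ = 0 := by
    rw [hd, inner_sub_right, inner_smul_right, h11, ← hα]; ring
  have hdne : d ≠ 0 := by
    intro h0
    have hume : um = α • e₁ := by
      have := h0; rw [hd, sub_eq_zero] at this; exact this
    have hαne : α ≠ 0 := by
      intro hα0; rw [hα0, zero_smul] at hume; exact hmz hume
    have h1 : (s + w) • (α • e₁) = α • ((s - w) • e₁) := by
      rw [← hume, ← hMum, hume, _root_.map_smul, hMe₁]
    have h2 : ((s + w) * α - α * (s - w)) • e₁ = 0 := by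
      rw [sub_smul, ← smul_smul, ← smul_smul, h1, sub_self]
    have h3 : (s + w) * α - α * (s - w) = 0 := by
      by_contra hne
      have := smul_eq_zero.mp h2
      rcases this with h | h
      · exact hne h
      · rw [h, norm_zero] at he₁; norm_num at he₁
    have : 2 * w * α = 0 := by linear_combination h3
    rcases mul_eq_zero.mp this with h | h
    · rcases mul_eq_zero.mp h with h' | h'
      · norm_num at h'
      · exact hw h'
    · exact hαne h
  set β : ℝ := ‖d‖ with hβdef
  have hβ : β ≠ 0 := by simpa [hβdef] using hdne
  have hβc : (β : ℂ) ≠ 0 := by exact_mod_cast hβ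
  set e₂ : E := ((β : ℂ))⁻¹ • d with he₂def
  have he₂ : ‖e₂‖ = 1 := by
    rw [he₂def, norm_smul]
    simp [hβdef]
    exact inv_mul_cancel₀ (norm_ne_zero_iff.mpr hdne)
  have hde : d = (β : ℂ) • e₂ := by
    rw [he₂def, smul_smul, mul_inv_cancel₀ hβc, one_smul]
  have h12 : ⟪e₁, e₂⟫ = 0 := by
    rw [he₂def, inner_smul_right, hde₁, mul_zero]
  have hume : um = α • e₁ + (β : ℂ) • e₂ := by
    rw [← hde, hd]; module
  set γ : ℂ := α * ((s + w) - (s - w)) * ((β : ℂ))⁻¹ with hγ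
  have hMe₂ : M e₂ = γ • e₁ + (s + w) • e₂ := by
    have hMd : M d = (α * ((s + w) - (s - w))) • e₁ + (s + w) • d := by
      rw [hd, map_sub, _root_.map_smul, hMum, hMe₁, hume]
      module
    rw [he₂def, _root_.map_smul, hMd, hde, hγ]
    match_scalars
    · ring
    · field_simp
  -- coordinates of v
  have h2wv : (2 * w) • v = up - um := by rw [hup, hum]; module
  have h2w : (2 * w) ≠ 0 := by
    intro h; rcases mul_eq_zero.mp h with h' | h'
    · norm_num at h'
    · exact hw h'
  have hvc : v = ((2 * w)⁻¹ * ((ρ : ℂ) - α)) • e₁ + (-((2 * w)⁻¹ * (β : ℂ))) • e₂ := by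
    have : v = (2 * w)⁻¹ • ((2 * w) • v) := by
      rw [smul_smul, inv_mul_cancel₀ h2w, one_smul]
    rw [this, h2wv, hupe, hume]
    module
  exact aux_key M (s - w) (s + w) γ _ _ v e₁ e₂ he₁ he₂ h12 hvc hMe₁ hMe₂

end aux

/-- For `w ≠ 0`, `λ₊ = c + w`, `λ₋ = c − w`, and every `v ∈ ℂⁿ` with `X̃²v = w²·v`,
`‖z·I − X‖ · ‖(z·I − X)v‖ ≥ (min(|z − λ₊|, |z − λ₋|))² · ‖v‖`. -/
theorem stmt_13 (n : ℕ) (hn : 1 ≤ n) (α α' β β' : ℝ)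
    (P Q X Xtil : Matrix (Fin n) (Fin n) ℂ)
    (hP : P.IsHermitian) (hQ : Q.IsHermitian)
    (hPs : (P - (α : ℂ) • 1) * (P - (α' : ℂ) • 1) = 0)
    (hQs : (Q - (β : ℂ) • 1) * (Q - (β' : ℂ) • 1) = 0)
    (hX : X = P + Complex.I • Q)
    (c : ℂ)
    (hc : c = (((α + α') / 2 : ℝ) : ℂ) + Complex.I * (((β + β') / 2 : ℝ) : ℂ))
    (hXtil : Xtil = X - c • 1)
    (z w : ℂ) (hw : w ≠ 0)
    (v : EuclideanSpace ℂ (Fin n))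
    (hv : Matrix.toEuclideanCLM (𝕜 := ℂ) (Xtil ^ 2) v = w ^ 2 • v) :
    ‖z • (1 : Matrix (Fin n) (Fin n) ℂ) - X‖ *
        ‖Matrix.toEuclideanCLM (𝕜 := ℂ) (z • (1 : Matrix (Fin n) (Fin n) ℂ) - X) v‖ ≥
      (min ‖z - (c + w)‖ ‖z - (c - w)‖) ^ 2 * ‖v‖ := by
  classical
  set Mc : EuclideanSpace ℂ (Fin n) →L[ℂ] EuclideanSpace ℂ (Fin n) :=
    Matrix.toEuclideanCLM (𝕜 := ℂ) (z • (1 : Matrix (Fin n) (Fin n) ℂ) - X) with hMc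
  set Tc : EuclideanSpace ℂ (Fin n) →L[ℂ] EuclideanSpace ℂ (Fin n) :=
    Matrix.toEuclideanCLM (𝕜 := ℂ) Xtil with hTc
  have hnorm : ‖z • (1 : Matrix (Fin n) (Fin n) ℂ) - X‖ = ‖Mc‖ := rfl
  have hmat : z • (1 : Matrix (Fin n) (Fin n) ℂ) - X = (z - c) • 1 - Xtil := by
    rw [hXtil]; module
  have hMapp : ∀ x : EuclideanSpace ℂ (Fin n), Mc x = (z - c) • x - Tc x := by
    intro x
    rw [hMc, hmat, map_sub, _root_.map_smul, _root_.map_one, hTc]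
    rfl
  have hT2 : Tc (Tc v) = w ^ 2 • v := by
    have h1 : Matrix.toEuclideanCLM (𝕜 := ℂ) (Xtil ^ 2) = Tc * Tc := by
      rw [pow_two, _root_.map_mul]
    rw [← hv, h1]; rfl
  have key := aux_main Mc Tc (z - c) w hw hMapp v hT2
  set m : ℝ := min (‖z - (c + w)‖) (‖z - (c - w)‖) with hm
  have hμ : z - (c + w) = (z - c) - w := by ring
  have hν : z - (c - w) = (z - c) + w := by ring
  have hm1 : m ≤ ‖(z - c) - w‖ := by rw [hm, ← hμ]; exact min_le_left _ _
  have hm2 : m ≤ ‖(z - c) + w‖ := by rw [hm, ← hν]; exact min_le_right _ _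
  have hm0 : 0 ≤ m := by
    rw [hm]; exact le_min (norm_nonneg _) (norm_nonneg _)
  rw [ge_iff_le, hnorm]
  rcases eq_or_ne v 0 with hv0 | hv0
  · rw [hv0, map_zero, norm_zero, mul_zero, mul_zero]
  rcases key with h | h | h
  · calc m ^ 2 * ‖v‖ ≤ (‖(z - c) - w‖ * ‖(z - c) + w‖) * ‖v‖ := by
          have : m ^ 2 ≤ ‖(z - c) - w‖ * ‖(z - c) + w‖ := by
            rw [pow_two]
            exact mul_le_mul hm1 hm2 hm0 (norm_nonneg _)
          exact mul_le_mul_of_nonneg_right this (norm_nonneg v)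
      _ ≤ ‖Mc‖ * ‖Mc v‖ := h
  · -- M v = ((z-c) - w) • v
    rw [h, norm_smul]
    have hb : m ≤ ‖(z - c) - w‖ := hm1
    have hMcb : m ≤ ‖Mc‖ := by
      have h1 : ‖Mc v‖ ≤ ‖Mc‖ * ‖v‖ := Mc.le_opNorm v
      rw [h, norm_smul] at h1
      have hvpos : 0 < ‖v‖ := norm_pos_iff.mpr hv0
      calc m ≤ ‖(z - c) - w‖ := hb
        _ ≤ ‖Mc‖ := by
          by_contra hlt
          push_neg at hlt
          nlinarith
    calc m ^ 2 * ‖v‖ = m * (m * ‖v‖) := by ring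
      _ ≤ ‖Mc‖ * (‖(z - c) - w‖ * ‖v‖) := by
          apply mul_le_mul hMcb (mul_le_mul_of_nonneg_right hb (norm_nonneg v))
            (by positivity) (norm_nonneg _)
  · rw [h, norm_smul]
    have hb : m ≤ ‖(z - c) + w‖ := hm2
    have hMcb : m ≤ ‖Mc‖ := by
      have h1 : ‖Mc v‖ ≤ ‖Mc‖ * ‖v‖ := Mc.le_opNorm v
      rw [h, norm_smul] at h1
      have hvpos : 0 < ‖v‖ := norm_pos_iff.mpr hv0
      calc m ≤ ‖(z - c) + w‖ := hb
        _ ≤ ‖Mc‖ := by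
          by_contra hlt
          push_neg at hlt
          nlinarith
    calc m ^ 2 * ‖v‖ = m * (m * ‖v‖) := by ring
      _ ≤ ‖Mc‖ * (‖(z - c) + w‖ * ‖v‖) := by
          apply mul_le_mul hMcb (mul_le_mul_of_nonneg_right hb (norm_nonneg v))
            (by positivity) (norm_nonneg _)
end

section
/- Let z ∈ ℂ. Then for every v ∈ ℂⁿ with X̃²v = 0 one has ‖z·I − X‖ · ‖(z·I − X)v‖ ≥ |z − c|² · ‖v‖. -/
open Matrix ContinuousLinearMap
open scoped Matrix.Norms.L2Operator InnerProductSpace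

noncomputable section

local notation "⟪" x ", " y "⟫" => @inner ℂ _ _ x y

lemma key_ineq {n : ℕ} (T : EuclideanSpace ℂ (Fin n) →L[ℂ] EuclideanSpace ℂ (Fin n))
    (d : ℂ) (v : EuclideanSpace ℂ (Fin n))
    (h : T (T v) = (2 * d) • T v - d ^ 2 • v) :
    ‖T‖ * ‖T v‖ ≥ ‖d‖ ^ 2 * ‖v‖ := by
  set u : EuclideanSpace ℂ (Fin n) := T v - d • v with hu_def
  have hTv : T v = u + d • v := by rw [hu_def]; module
  have hTu : T u = d • u := by
    rw [hu_def, map_sub, _root_.map_smul, h]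
    module
  by_cases hu : u = 0
  · have hTvd : T v = d • v := by rw [hTv, hu, zero_add]
    by_cases hv0 : v = 0
    · rw [hv0]
      simp only [map_zero, norm_zero, mul_zero]
      exact le_rfl

    · have hnv : 0 < ‖v‖ := norm_pos_iff.2 hv0
      have h1 : ‖T v‖ = ‖d‖ * ‖v‖ := by
        rw [hTvd, norm_smul]
      have h2 : ‖d‖ ≤ ‖T‖ := by
        have h3 := T.le_opNorm v
        rw [h1] at h3
        exact le_of_mul_le_mul_right h3 hnv
      rw [h1]
      have := mul_le_mul_of_nonneg_right h2
        (mul_nonneg (norm_nonneg d) hnv.le)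
      calc ‖d‖ ^ 2 * ‖v‖ = ‖d‖ * (‖d‖ * ‖v‖) := by ring
        _ ≤ ‖T‖ * (‖d‖ * ‖v‖) := this
  · have hq : 0 < ‖u‖ := norm_pos_iff.2 hu
    set q : ℝ := ‖u‖ with hq_def
    have hqc : (q : ℂ) ≠ 0 := by exact_mod_cast hq.ne'
    set e1 : EuclideanSpace ℂ (Fin n) := (q : ℂ)⁻¹ • u with he1_def
    have hue1 : u = (q : ℂ) • e1 := by
      rw [he1_def, smul_smul, mul_inv_cancel₀ hqc, one_smul]
    have hne1 : ‖e1‖ = 1 := by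
      rw [he1_def, norm_smul]
      simp [hq.ne', abs_of_pos hq]
      rw [← hq_def]; exact inv_mul_cancel₀ hq.ne'
    have he1 : ⟪e1, e1⟫ = 1 := by
      rw [inner_self_eq_norm_sq_to_K, hne1]; norm_num
    have hTe1 : T e1 = d • e1 := by
      rw [he1_def, _root_.map_smul, hTu, smul_comm]
    set c1 : ℂ := ⟪e1, v⟫ with hc1_def
    set v' : EuclideanSpace ℂ (Fin n) := v - c1 • e1 with hv'_def
    have hv'1 : ⟪e1, v'⟫ = 0 := by
      rw [hv'_def, inner_sub_right, inner_smul_right, he1, mul_one, ← hc1_def, sub_self]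
    have hv'ne : v' ≠ 0 := by
      intro h0
      apply hu
      have hveq : v = c1 • e1 := by
        rw [hv'_def, sub_eq_zero] at h0; exact h0
      rw [hu_def, hveq, _root_.map_smul, hTe1]
      module
    have hδ : 0 < ‖v'‖ := norm_pos_iff.2 hv'ne
    set δ : ℝ := ‖v'‖ with hδ_def
    have hδc : (δ : ℂ) ≠ 0 := by exact_mod_cast hδ.ne'
    set e2 : EuclideanSpace ℂ (Fin n) := (δ : ℂ)⁻¹ • v' with he2_def
    have hv'e2 : v' = (δ : ℂ) • e2 := by
      rw [he2_def, smul_smul, mul_inv_cancel₀ hδc, one_smul]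
    have hne2 : ‖e2‖ = 1 := by
      rw [he2_def, norm_smul]
      simp [hδ.ne', abs_of_pos hδ]
      rw [← hδ_def]; exact inv_mul_cancel₀ hδ.ne'
    have he2 : ⟪e2, e2⟫ = 1 := by
      rw [inner_self_eq_norm_sq_to_K, hne2]; norm_num
    have he12 : ⟪e1, e2⟫ = 0 := by
      rw [he2_def, inner_smul_right, hv'1, mul_zero]
    have he21 : ⟪e2, e1⟫ = 0 := by
      rw [← inner_conj_symm, he12, map_zero]
    have hvcoord : v = c1 • e1 + (δ : ℂ) • e2 := by
      rw [← hv'e2, hv'_def]; module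
    have hTv' : T v' = d • v' + (q : ℂ) • e1 := by
      rw [hv'_def, map_sub, _root_.map_smul, hTe1, hTv, hue1]
      module
    set mC : ℂ := (q : ℂ) * (δ : ℂ)⁻¹ with hmC_def
    have hmCconj : (starRingEnd ℂ) mC = mC := by
      rw [hmC_def, _root_.map_mul, map_inv₀, Complex.conj_ofReal, Complex.conj_ofReal]
    have hTe2 : T e2 = d • e2 + mC • e1 := by
      rw [he2_def, _root_.map_smul, hTv', hmC_def]
      module
    set y1 : ℂ := d * c1 + q with hy1_def
    set y2 : ℂ := d * (δ : ℂ) with hy2_def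
    have hycoord : T v = y1 • e1 + y2 • e2 := by
      rw [hTv, hue1, hy1_def, hy2_def, hvcoord]
      module
    clear_value u q e1 c1 v' δ e2 mC y1 y2
    have hTTv : T (T v) = (d * y1 + mC * y2) • e1 + (d * y2) • e2 := by
      calc T (T v) = T (y1 • e1 + y2 • e2) := by rw [← hycoord]
        _ = y1 • T e1 + y2 • T e2 := by
            rw [map_add, _root_.map_smul, _root_.map_smul]
        _ = _ := by rw [hTe1, hTe2]; module
    have hwcoord : d ^ 2 • v = (d * y1 - mC * y2) • e1 + (d * y2) • e2 := by
      have hrearr : d ^ 2 • v = (2 * d) • T v - T (T v) := by rw [h]; module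
      rw [hrearr, hTTv, hycoord]
      module
    have hnorm2 : ∀ a b : ℂ, ‖a • e1 + b • e2‖ ^ 2
        = ‖a‖ ^ 2 + ‖b‖ ^ 2 := by
      intro a b
      have hor : ⟪a • e1, b • e2⟫ = 0 := by
        rw [inner_smul_left, inner_smul_right, he12, mul_zero, mul_zero]
      rw [sq, norm_add_sq_eq_norm_sq_add_norm_sq_of_inner_eq_zero _ _ hor, norm_smul,
        norm_smul, hne1, hne2]
      simp only [mul_one]
      ring
    set z' : EuclideanSpace ℂ (Fin n) :=
      (-(starRingEnd ℂ) y2) • e1 + ((starRingEnd ℂ) y1) • e2 with hz'_def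
    clear_value z'
    have hnz : ‖z'‖ ^ 2 = ‖T v‖ ^ 2 := by
      rw [hz'_def, hnorm2, hycoord, hnorm2, norm_neg, Complex.norm_conj,
        Complex.norm_conj]
      ring
    have hze1 : ⟪e1, z'⟫ = -(starRingEnd ℂ) y2 := by
      rw [hz'_def, inner_add_right, inner_smul_right, inner_smul_right, he1, he12]
      ring
    have hze2 : ⟪e2, z'⟫ = (starRingEnd ℂ) y1 := by
      rw [hz'_def, inner_add_right, inner_smul_right, inner_smul_right, he21, he2]
      ring
    set T' := ContinuousLinearMap.adjoint T with hT'_def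
    clear_value T'
    have ha1 : ⟪e1, T' z'⟫ = (starRingEnd ℂ) d * (-(starRingEnd ℂ) y2) := by
      rw [hT'_def, ContinuousLinearMap.adjoint_inner_right, hTe1, inner_smul_left, hze1]
    have ha2 : ⟪e2, T' z'⟫
        = (starRingEnd ℂ) d * (starRingEnd ℂ) y1 + mC * (-(starRingEnd ℂ) y2) := by
      rw [hT'_def, ContinuousLinearMap.adjoint_inner_right, hTe2, inner_add_left,
        inner_smul_left, inner_smul_left, hze2, hze1, hmCconj]
    have hg1' : ⟪e1, T' z' - (⟪e1, T' z'⟫ • e1 + ⟪e2, T' z'⟫ • e2)⟫ = 0 := by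
      rw [inner_sub_right, inner_add_right, inner_smul_right, inner_smul_right, he1, he12]
      ring
    have hg2' : ⟪e2, T' z' - (⟪e1, T' z'⟫ • e1 + ⟪e2, T' z'⟫ • e2)⟫ = 0 := by
      rw [inner_sub_right, inner_add_right, inner_smul_right, inner_smul_right, he21, he2]
      ring
    have hor2 : ⟪⟪e1, T' z'⟫ • e1 + ⟪e2, T' z'⟫ • e2,
        T' z' - (⟪e1, T' z'⟫ • e1 + ⟪e2, T' z'⟫ • e2)⟫ = 0 := by
      rw [inner_add_left, inner_smul_left, inner_smul_left, hg1', hg2']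
      ring
    have hpyth : ‖⟪e1, T' z'⟫‖ ^ 2 + ‖⟪e2, T' z'⟫‖ ^ 2
        ≤ ‖T' z'‖ ^ 2 := by
      have e : (⟪e1, T' z'⟫ • e1 + ⟪e2, T' z'⟫ • e2) +
          (T' z' - (⟪e1, T' z'⟫ • e1 + ⟪e2, T' z'⟫ • e2)) = T' z' := by abel
      have h4 := norm_add_sq_eq_norm_sq_add_norm_sq_of_inner_eq_zero _ _ hor2
      rw [e] at h4
      have h6 : ‖⟪e1, T' z'⟫ • e1 + ⟪e2, T' z'⟫ • e2‖ * ‖⟪e1, T' z'⟫ • e1 + ⟪e2, T' z'⟫ • e2‖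
          = ‖⟪e1, T' z'⟫‖ ^ 2 + ‖⟪e2, T' z'⟫‖ ^ 2 := by
        rw [← sq, hnorm2]
      rw [h6] at h4
      rw [sq]
      linarith [mul_self_nonneg ‖T' z' - (⟪e1, T' z'⟫ • e1 + ⟪e2, T' z'⟫ • e2)‖]
    have habs : ‖⟪e1, T' z'⟫‖ ^ 2 + ‖⟪e2, T' z'⟫‖ ^ 2
        = ‖d ^ 2 • v‖ ^ 2 := by
      rw [ha1, ha2, hwcoord, hnorm2]
      have hconj2 : (starRingEnd ℂ) d * (starRingEnd ℂ) y1 + mC * (-(starRingEnd ℂ) y2)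
          = (starRingEnd ℂ) (d * y1 - mC * y2) := by
        rw [map_sub, _root_.map_mul, _root_.map_mul, hmCconj]; ring
      have hconj1 : (starRingEnd ℂ) d * (-(starRingEnd ℂ) y2)
          = -((starRingEnd ℂ) (d * y2)) := by
        rw [_root_.map_mul]; ring
      rw [hconj1, hconj2, norm_neg, Complex.norm_conj, Complex.norm_conj]
      ring
    have hTz : ‖T' z'‖ ≤ ‖T‖ * ‖z'‖ := by
      have h5 := T'.le_opNorm z'
      have h6 : ‖T'‖ = ‖T‖ := by
        rw [hT'_def]
        exact LinearIsometryEquiv.norm_map ContinuousLinearMap.adjoint T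
      rwa [h6] at h5
    have hfin2 : ‖d ^ 2 • v‖ ^ 2 ≤ (‖T‖ * ‖T v‖) ^ 2 := by
      calc ‖d ^ 2 • v‖ ^ 2 = ‖⟪e1, T' z'⟫‖ ^ 2 + ‖⟪e2, T' z'⟫‖ ^ 2 :=
            habs.symm
        _ ≤ ‖T' z'‖ ^ 2 := hpyth
        _ ≤ (‖T‖ * ‖z'‖) ^ 2 := by
            have := pow_le_pow_left₀ (norm_nonneg _) hTz 2
            exact this
        _ = ‖T‖ ^ 2 * ‖z'‖ ^ 2 := by ring
        _ = ‖T‖ ^ 2 * ‖T v‖ ^ 2 := by rw [hnz]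
        _ = (‖T‖ * ‖T v‖) ^ 2 := by ring
    have h7 : ‖d ^ 2 • v‖ ≤ ‖T‖ * ‖T v‖ := by
      have hnn : (0:ℝ) ≤ ‖T‖ * ‖T v‖ := mul_nonneg (norm_nonneg _) (norm_nonneg _)
      exact (pow_le_pow_iff_left₀ (norm_nonneg _) hnn two_ne_zero).mp hfin2
    have hwnorm : ‖d ^ 2 • v‖ = ‖d‖ ^ 2 * ‖v‖ := by
      rw [norm_smul, norm_pow]
    rw [← hwnorm]
    exact h7


/-- For every `v ∈ ℂⁿ` with `X̃²v = 0`, `‖z·I − X‖ · ‖(z·I − X)v‖ ≥ |z − c|² · ‖v‖`. -/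
theorem stmt_14 (n : ℕ) (hn : 1 ≤ n) (α α' β β' : ℝ)
    (P Q X Xtil : Matrix (Fin n) (Fin n) ℂ)
    (hP : P.IsHermitian) (hQ : Q.IsHermitian)
    (hPs : (P - (α : ℂ) • 1) * (P - (α' : ℂ) • 1) = 0)
    (hQs : (Q - (β : ℂ) • 1) * (Q - (β' : ℂ) • 1) = 0)
    (hX : X = P + Complex.I • Q)
    (c : ℂ)
    (hc : c = (((α + α') / 2 : ℝ) : ℂ) + Complex.I * (((β + β') / 2 : ℝ) : ℂ))
    (hXtil : Xtil = X - c • 1)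
    (z : ℂ) (v : EuclideanSpace ℂ (Fin n))
    (hv : Matrix.toEuclideanCLM (𝕜 := ℂ) (Xtil ^ 2) v = 0) :
    ‖z • (1 : Matrix (Fin n) (Fin n) ℂ) - X‖ *
        ‖Matrix.toEuclideanCLM (𝕜 := ℂ) (z • (1 : Matrix (Fin n) (Fin n) ℂ) - X) v‖ ≥
      ‖z - c‖ ^ 2 * ‖v‖ := by
  set d : ℂ := z - c with hd
  set A : Matrix (Fin n) (Fin n) ℂ := z • 1 - X with hA
  set T := Matrix.toEuclideanCLM (𝕜 := ℂ) A with hT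
  have hXtil' : Xtil = d • 1 - A := by
    rw [hXtil, hA, hd]; module
  have hS : Matrix.toEuclideanCLM (𝕜 := ℂ) Xtil
      = d • (1 : EuclideanSpace ℂ (Fin n) →L[ℂ] EuclideanSpace ℂ (Fin n)) - T := by
    rw [hXtil', _root_.map_sub, _root_.map_smul, _root_.map_one, hT]
  have hvv : ((d • (1 : EuclideanSpace ℂ (Fin n) →L[ℂ] EuclideanSpace ℂ (Fin n)) - T) *
      (d • 1 - T)) v = 0 := by
    rw [← hS, ← _root_.map_mul, ← sq]
    exact hv
  have h4 : (d • (1 : EuclideanSpace ℂ (Fin n) →L[ℂ] EuclideanSpace ℂ (Fin n)) - T)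
      ((d • (1 : EuclideanSpace ℂ (Fin n) →L[ℂ] EuclideanSpace ℂ (Fin n)) - T) v) = 0 := by
    rw [← ContinuousLinearMap.mul_apply]
    exact hvv
  have h5 : ∀ w : EuclideanSpace ℂ (Fin n),
      (d • (1 : EuclideanSpace ℂ (Fin n) →L[ℂ] EuclideanSpace ℂ (Fin n)) - T) w
        = d • w - T w := by
    intro w
    simp [ContinuousLinearMap.sub_apply, ContinuousLinearMap.smul_apply,
      ContinuousLinearMap.one_apply]
  rw [h5, h5, map_sub, _root_.map_smul] at h4
  have h : T (T v) = (2 * d) • T v - d ^ 2 • v := by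
    have h7 : T (T v) - ((2 * d) • T v - d ^ 2 • v)
        = d • (d • v - T v) - (d • T v - T (T v)) := by module
    exact sub_eq_zero.mp (h7.trans h4)
  have hnA : ‖A‖ = ‖T‖ := by rw [hT]; exact Matrix.cstar_norm_def A
  rw [hnA]
  exact key_ineq T d v h
end
end

section
/- Assume (α, β) ≠ (α', β'). Then the eigenspace of X = P + iQ for the eigenvalue α + iβ equals the intersection of the eigenspaces of P and Q: ker(X − (α + iβ)·I) = ker(P − α·I) ∩ ker(Q − β·I) as subspaces of ℂⁿ. -/
open Matrix

/-- If `(α, β) ≠ (α', β')`, then the eigenspace of `X = P + iQ` at `α + iβ` equals the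
intersection of the `α`-eigenspace of `P` and the `β`-eigenspace of `Q`. -/
theorem stmt_18 (n : ℕ) (hn : 1 ≤ n) (α α' β β' : ℝ)
    (hne : (α, β) ≠ (α', β'))
    (P Q : Matrix (Fin n) (Fin n) ℂ)
    (hP : P.IsHermitian) (hQ : Q.IsHermitian)
    (hPs : (P - (α : ℂ) • 1) * (P - (α' : ℂ) • 1) = 0)
    (hQs : (Q - (β : ℂ) • 1) * (Q - (β' : ℂ) • 1) = 0) :
    LinearMap.ker ((P + Complex.I • Q)
        - ((α : ℂ) + Complex.I * (β : ℂ)) • (1 : Matrix (Fin n) (Fin n) ℂ)).mulVecLin =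
      LinearMap.ker (P - (α : ℂ) • (1 : Matrix (Fin n) (Fin n) ℂ)).mulVecLin ⊓
        LinearMap.ker (Q - (β : ℂ) • (1 : Matrix (Fin n) (Fin n) ℂ)).mulVecLin := by
  have herm : ∀ (A : Matrix (Fin n) (Fin n) ℂ), A.IsHermitian → ∀ x y : Fin n → ℂ,
      star x ⬝ᵥ (A *ᵥ y) = star (A *ᵥ x) ⬝ᵥ y := by
    intro A hA x y
    rw [star_mulVec, hA.eq, dotProduct_mulVec]
  have expand : ∀ (A : Matrix (Fin n) (Fin n) ℂ) (a b : ℂ),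
      (A - a • 1) * (A - b • 1) = A * A - (a + b) • A + (a * b) • 1 := by
    intro A a b
    simp only [sub_mul, mul_sub, smul_mul_assoc, mul_smul_comm, one_mul, mul_one,
      smul_smul, add_smul, smul_sub]
    module
  have hPs' : (P - (α' : ℂ) • 1) * (P - (α : ℂ) • 1) = 0 := by
    rw [expand] at hPs ⊢
    rw [add_comm (α' : ℂ) (α : ℂ), mul_comm (α' : ℂ) (α : ℂ)]
    exact hPs
  have hQs' : (Q - (β' : ℂ) • 1) * (Q - (β : ℂ) • 1) = 0 := by
    rw [expand] at hQs ⊢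
    rw [add_comm (β' : ℂ) (β : ℂ), mul_comm (β' : ℂ) (β : ℂ)]
    exact hQs
  ext v
  simp only [LinearMap.mem_ker, Submodule.mem_inf, Matrix.mulVecLin_apply]
  constructor
  · intro h
    set u := (P - (α : ℂ) • 1) *ᵥ v with hu
    set w := (Q - (β : ℂ) • 1) *ᵥ v with hwdef
    have hsplit : u + Complex.I • w = 0 := by
      rw [← h]
      simp only [hu, hwdef, Matrix.sub_mulVec, Matrix.add_mulVec, Matrix.smul_mulVec,
        Matrix.one_mulVec]
      module
    have hw : w = Complex.I • u := by
      have h1 : Complex.I • w = -u := by rw [eq_neg_iff_add_eq_zero, add_comm]; exact hsplit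
      calc w = (-Complex.I) • (Complex.I • w) := by
              rw [smul_smul, neg_mul, Complex.I_mul_I, neg_neg, one_smul]
        _ = (-Complex.I) • (-u) := by rw [h1]
        _ = Complex.I • u := by rw [smul_neg, neg_smul, neg_neg]
    have hPu : P *ᵥ u = (α' : ℂ) • u := by
      have h0 : (P - (α' : ℂ) • 1) *ᵥ u = 0 := by
        rw [hu, Matrix.mulVec_mulVec, hPs', Matrix.zero_mulVec]
      rwa [Matrix.sub_mulVec, Matrix.smul_mulVec, Matrix.one_mulVec, sub_eq_zero] at h0
    have hQw : Q *ᵥ w = (β' : ℂ) • w := by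
      have h0 : (Q - (β' : ℂ) • 1) *ᵥ w = 0 := by
        rw [hwdef, Matrix.mulVec_mulVec, hQs', Matrix.zero_mulVec]
      rwa [Matrix.sub_mulVec, Matrix.smul_mulVec, Matrix.one_mulVec, sub_eq_zero] at h0
    have hQu : Q *ᵥ u = (β' : ℂ) • u := by
      have h0 := hQw
      rw [hw, Matrix.mulVec_smul, smul_smul, mul_comm, ← smul_smul] at h0
      exact smul_right_injective _ Complex.I_ne_zero h0
    have hPv : P *ᵥ v = (α : ℂ) • v + u := by
      rw [hu, Matrix.sub_mulVec, Matrix.smul_mulVec, Matrix.one_mulVec]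
      abel
    have hQv : Q *ᵥ v = (β : ℂ) • v + w := by
      rw [hwdef, Matrix.sub_mulVec, Matrix.smul_mulVec, Matrix.one_mulVec]
      abel
    set c := star u ⬝ᵥ v with hc
    set s := star u ⬝ᵥ u with hs
    have e1 : (α : ℂ) * c + s = (α' : ℂ) * c := by
      have hh := herm P hP u v
      rw [hPv, hPu] at hh
      simpa [dotProduct_add, dotProduct_smul, star_smul, smul_dotProduct, smul_eq_mul,
        Complex.star_def, Complex.conj_ofReal, ← hc, ← hs] using hh
    have e2 : (β : ℂ) * c + Complex.I * s = (β' : ℂ) * c := by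
      have hh := herm Q hQ u v
      rw [hQv, hQu, hw] at hh
      simpa [dotProduct_add, dotProduct_smul, star_smul, smul_dotProduct, smul_eq_mul,
        Complex.star_def, Complex.conj_ofReal, ← hc, ← hs, mul_comm, mul_left_comm] using hh
    have ha : ((α' : ℂ) - α) * c = s := by linear_combination -e1
    have hb : ((β' : ℂ) - β) * c = Complex.I * s := by linear_combination -e2
    have hs0 : s = 0 := by
      by_contra hsne
      have key : ((β' : ℂ) - β) * s = (((α' : ℂ) - α) * Complex.I) * s := by
        linear_combination ((α' : ℂ) - α) * hb - ((β' : ℂ) - β) * ha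
      have hcancel : ((β' : ℂ) - β) = ((α' : ℂ) - α) * Complex.I :=
        mul_right_cancel₀ hsne key
      have him := congrArg Complex.im hcancel
      simp [Complex.mul_im] at him
      -- him : α' - α = 0 (roughly)
      have hαr : α' = α := by linarith
      have hα : (α' : ℂ) - α = 0 := by rw [hαr, sub_self]
      rw [hα, zero_mul] at ha
      exact hsne ha.symm
    have hu0 : u = 0 := by
      have hsumC : ∑ j, (Complex.normSq (u j) : ℂ) = 0 := by
        rw [← hs0, hs, dotProduct]
        exact Finset.sum_congr rfl fun j _ => by
          rw [Complex.normSq_eq_conj_mul_self]; rfl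
      have hsum : ∑ j, Complex.normSq (u j) = 0 := by exact_mod_cast hsumC
      funext i
      have := (Finset.sum_eq_zero_iff_of_nonneg
        (fun j _ => Complex.normSq_nonneg (u j))).mp hsum i (Finset.mem_univ i)
      exact Complex.normSq_eq_zero.mp this
    refine ⟨hu0, ?_⟩
    rw [hwdef] at hw ⊢
    rw [hw, hu0, smul_zero]
  · rintro ⟨h1, h2⟩
    have key : ((P + Complex.I • Q) - ((α : ℂ) + Complex.I * β) • 1) *ᵥ v
        = (P - (α : ℂ) • 1) *ᵥ v + Complex.I • ((Q - (β : ℂ) • 1) *ᵥ v) := by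
      simp only [Matrix.sub_mulVec, Matrix.add_mulVec, Matrix.smul_mulVec,
        Matrix.one_mulVec]
      module
    rw [key, h1, h2, smul_zero, add_zero]
end
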